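/- arXiv:2012.09915 — 2 statements merged into one kernel-verified Lean document; each statement's English description precedes it below -/
import Mathlib

section
/- Let gₙ : ℝ → ℝ be C¹ functions converging to a C¹ function g uniformly together with their first derivatives: sup_y |gₙ(y) − g(y)| → 0 and sup_y |gₙ'(y) − g'(y)| → 0. If g has a local maximum at m with g twice differentiable there and g''(m) < 0, then for every ε > 0 there is N such that for all n ≥ N the function gₙ has a critical point within ε of m. -/
open Filter Set Topology

theorem critical_points_converge
    (g : ℕ → ℝ → ℝ) (G : ℝ → ℝ)
    (hg : ∀ n, ContDiff ℝ 1 (g n)) (hG : ContDiff ℝ 1 G)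
    (hconv : ∀ ε > (0:ℝ), ∃ N, ∀ n ≥ N, ∀ y : ℝ, |g n y - G y| < ε)
    (hconv' : ∀ ε > (0:ℝ), ∃ N, ∀ n ≥ N, ∀ y : ℝ, |deriv (g n) y - deriv G y| < ε)
    (m L : ℝ) (hmax : IsLocalMax G m)
    (hsecond : HasDerivAt (deriv G) L m) (hL : L < 0) :
    ∀ ε > (0:ℝ), ∃ N, ∀ n ≥ N, ∃ y : ℝ, |y - m| < ε ∧ deriv (g n) y = 0 := by
  intro ε hε
  have hG'm : deriv G m = 0 := hmax.deriv_eq_zero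
  have hslope : Tendsto (slope (deriv G) m) (𝓝[≠] m) (𝓝 L) :=
    hasDerivAt_iff_tendsto_slope.mp hsecond
  have hev : ∀ᶠ y in 𝓝[≠] m, slope (deriv G) m y < 0 :=
    hslope.eventually (Iio_mem_nhds hL)
  obtain ⟨δ, hδ, hball⟩ := Metric.mem_nhdsWithin_iff.mp hev
  set d : ℝ := min (δ/2) (ε/2) with hd
  have hd0 : 0 < d := lt_min (by linarith) (by linarith)
  have hdδ : d < δ := lt_of_le_of_lt (min_le_left _ _) (by linarith)
  have hdε : d < ε := lt_of_le_of_lt (min_le_right _ _) (by linarith)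
  set a : ℝ := m - d with ha
  set b : ℝ := m + d with hb
  have ham : a - m = -d := by rw [ha]; ring
  have hbm : b - m = d := by rw [hb]; ring
  have hmema : a ∈ Metric.ball m δ ∩ {m}ᶜ := by
    refine ⟨?_, ?_⟩
    · simp only [Metric.mem_ball, Real.dist_eq, ham, abs_neg, abs_of_pos hd0]
      exact hdδ
    · simp only [mem_compl_iff, mem_singleton_iff]
      intro h; rw [h] at ham; linarith
  have hmemb : b ∈ Metric.ball m δ ∩ {m}ᶜ := by
    refine ⟨?_, ?_⟩
    · simp only [Metric.mem_ball, Real.dist_eq, hbm, abs_of_pos hd0]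
      exact hdδ
    · simp only [mem_compl_iff, mem_singleton_iff]
      intro h; rw [h] at hbm; linarith
  have hsa : slope (deriv G) m a < 0 := hball hmema
  have hsb : slope (deriv G) m b < 0 := hball hmemb
  rw [slope_def_field, hG'm, sub_zero, div_neg_iff] at hsa hsb
  have hGa : 0 < deriv G a := by
    rcases hsa with ⟨h1, _⟩ | ⟨_, h2⟩
    · exact h1
    · exfalso; rw [ham] at h2; linarith
  have hGb : deriv G b < 0 := by
    rcases hsb with ⟨_, h2⟩ | ⟨h1, _⟩
    · exfalso; rw [hbm] at h2; linarith
    · exact h1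
  set η : ℝ := min (deriv G a) (-(deriv G b)) with hη
  have hη0 : 0 < η := lt_min hGa (by linarith)
  obtain ⟨N, hN⟩ := hconv' η hη0
  refine ⟨N, fun n hn => ?_⟩
  have hna : 0 < deriv (g n) a := by
    have := hN n hn a
    have h1 : η ≤ deriv G a := min_le_left _ _
    rw [abs_lt] at this; linarith
  have hnb : deriv (g n) b < 0 := by
    have := hN n hn b
    have h2 : η ≤ -(deriv G b) := min_le_right _ _
    rw [abs_lt] at this; linarith
  have hab : a ≤ b := by rw [ha, hb]; linarith
  have hcont : ContinuousOn (deriv (g n)) (Icc a b) :=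
    ((hg n).continuous_deriv le_rfl).continuousOn
  have h0 : (0:ℝ) ∈ Icc (deriv (g n) b) (deriv (g n) a) := ⟨hnb.le, hna.le⟩
  obtain ⟨y, hy, hy0⟩ := intermediate_value_Icc' hab hcont h0
  refine ⟨y, ?_, hy0⟩
  rw [abs_lt]
  obtain ⟨hy1, hy2⟩ := hy
  rw [ha] at hy1; rw [hb] at hy2
  constructor <;> linarith
end

section
/- Let φ ↦ f̂(φ) = C Σⱼ wⱼ exp[−κ(1 − cos(φ − Φⱼ))] with wⱼ > 0, C > 0, κ > 0 (von Mises-type conditional density estimate). Then the circular mean shift function m̃(φ) = sin(ω̃(φ) − φ), where ω̃(φ) = atan2(Σⱼ wⱼ e^{−κ(1−cos(φ−Φⱼ))} sin Φⱼ, Σⱼ wⱼ e^{−κ(1−cos(φ−Φⱼ))} cos Φⱼ), satisfies: m̃(φ) = 0 whenever f̂'(φ) = 0, provided the weighted sine/cosine sums at φ are not both zero. -/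
open Real

theorem circular_mean_shift_zero_at_critical
    (n : ℕ) (C κ : ℝ) (hC : 0 < C) (hκ : 0 < κ)
    (w Φ : Fin n → ℝ) (hw : ∀ j, 0 < w j)
    (f : ℝ → ℝ)
    (hf : f = fun φ => C * ∑ j, w j * exp (-(κ * (1 - cos (φ - Φ j)))))
    (S Cs : ℝ → ℝ)
    (hS : S = fun φ => ∑ j, w j * exp (-(κ * (1 - cos (φ - Φ j)))) * sin (Φ j))
    (hCs : Cs = fun φ => ∑ j, w j * exp (-(κ * (1 - cos (φ - Φ j)))) * cos (Φ j))
    (φ : ℝ) (hne : ¬(S φ = 0 ∧ Cs φ = 0)) (hcrit : deriv f φ = 0) :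
    sin (Complex.arg (Complex.I * (S φ) + (Cs φ)) - φ) = 0 := by
  -- derivative computation
  have hd : ∀ j : Fin n, HasDerivAt (fun x => w j * exp (-(κ * (1 - cos (x - Φ j)))))
      (w j * exp (-(κ * (1 - cos (φ - Φ j)))) * (-(κ * sin (φ - Φ j)))) φ := by
    intro j
    have h1 : HasDerivAt (fun x : ℝ => x - Φ j) 1 φ := (hasDerivAt_id φ).sub_const _
    have h2 : HasDerivAt (fun x : ℝ => cos (x - Φ j)) (-sin (φ - Φ j) * 1) φ :=
      (Real.hasDerivAt_cos _).comp φ h1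
    have h3 : HasDerivAt (fun x : ℝ => -(κ * (1 - cos (x - Φ j))))
        (-(κ * (0 - (-sin (φ - Φ j) * 1)))) φ :=
      (((hasDerivAt_const φ (1:ℝ)).sub h2).const_mul κ).neg
    have h5 := h3.exp.const_mul (w j)
    refine h5.congr_deriv ?_
    ring
  have hD : HasDerivAt f
      (C * ∑ j, w j * exp (-(κ * (1 - cos (φ - Φ j)))) * (-(κ * sin (φ - Φ j)))) φ := by
    rw [hf]
    exact (HasDerivAt.fun_sum fun j _ => hd j).const_mul C
  have hderiv : deriv f φ
      = C * ∑ j, w j * exp (-(κ * (1 - cos (φ - Φ j)))) * (-(κ * sin (φ - Φ j))) := hD.deriv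
  have hsum : (∑ j, w j * exp (-(κ * (1 - cos (φ - Φ j)))) * (-(κ * sin (φ - Φ j))))
      = -κ * (sin φ * Cs φ - cos φ * S φ) := by
    rw [hS, hCs]
    simp only [Finset.mul_sum, Finset.mul_sum, ← Finset.sum_sub_distrib]
    refine Finset.sum_congr rfl fun j _ => ?_
    rw [Real.sin_sub]
    ring
  have key : sin φ * Cs φ - cos φ * S φ = 0 := by
    rw [hderiv, hsum] at hcrit
    have hCκ : C * -κ ≠ 0 := by
      have : κ ≠ 0 := ne_of_gt hκ
      intro h
      rcases mul_eq_zero.mp h with h | h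
      · exact (ne_of_gt hC) h
      · exact this (neg_eq_zero.mp h)
    have : C * -κ * (sin φ * Cs φ - cos φ * S φ) = 0 := by linarith [hcrit]
    exact (mul_eq_zero.mp this).resolve_left hCκ
  -- complex part
  set z : ℂ := Complex.I * (S φ) + (Cs φ) with hz
  have hre : z.re = Cs φ := by simp [hz]
  have him : z.im = S φ := by simp [hz]
  have hz0 : z ≠ 0 := by
    intro h
    apply hne
    constructor
    · rw [← him, h]; simp
    · rw [← hre, h]; simp
  have habs : ‖z‖ ≠ 0 := by
    simpa using (norm_ne_zero_iff.mpr hz0)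
  rw [Real.sin_sub, Complex.sin_arg, Complex.cos_arg hz0, hre, him]
  field_simp
  linarith [key]
end
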